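/- In the robust pro-rata setting, the finite-horizon robust control problem — minimize over affine policies ([p̂],[û],[Θ],[Γ]) the worst-case cost max_{[d]∈𝒟} J([p],[u]) subject to the robust constraints holding for every [d]∈𝒟 (p(t)≥0, u(t)≥0, Σ_{k=0}^{t} α^{t−k} p(k) ≤ α^t p̄, w(t+1)≥0, B(t)≤F(t) for all t) — has the same optimal value as the explicit linear program: minimize J̄([p̂],[û],[Θ],[Γ]) = β₀·1ᵀp̄ − Σ_t β_t·1ᵀp̂(t) + γ·Σ_t 1ᵀû(t) + Σ_t Σ_j |((γΓ(t)−β_tΘ(t))ᵀ1)_j| r_j(t) subject to, for all t: p̂(t)−|Θ(t)|r(t)≥0; û(t)−|Γ(t)|r(t)≥0; Σ_{k=0}^{t} α^{t−k}(p̂(k)+|Θ(k)|r(k)) ≤ α^t p̄; ŵ(t+1)−Σ_{k=0}^{t}|I+Γ(k)+(Aᵀ−I)Θ(k)|r(k) ≥ 0; and Σ_{τ=0}^{t}(1ᵀû(τ)+Σ_j |(Γ(τ)ᵀ1)_j| r_j(τ)) ≤ F(t); moreover a policy is optimal for the robust problem if and only if it is optimal for the explicit linear program. -/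

import Mathlib

open Finset

noncomputable section

/-- The coefficient `β_t = η α^{T-t} + (1-η) a_t`, where `a_t = Σ_{j=0}^{T-t-1} α^j`. -/
def betaCoef (T : ℕ) (α η : ℝ) (t : ℕ) : ℝ :=
  η * α ^ (T - t) + (1 - η) * ∑ j ∈ Finset.range (T - t), α ^ j

/-- The set of admissible disturbance sequences `𝒟`. -/
def distOK (n T : ℕ) (r : ℕ → Fin n → ℝ) (d : ℕ → Fin n → ℝ) : Prop :=
  ∀ k, k < T → ∀ j, |d k j| ≤ r k j

/-- The realized cost `J([p],[u])` of an affine policy under disturbance sequence `d`. -/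
def realCost (n T : ℕ) (α η γ : ℝ) (pbar : Fin n → ℝ)
    (phat uhat : ℕ → Fin n → ℝ) (Θ Γ : ℕ → Matrix (Fin n) (Fin n) ℝ)
    (d : ℕ → Fin n → ℝ) : ℝ :=
  betaCoef T α η 0 * ∑ i, pbar i
    - ∑ t ∈ Finset.range T, betaCoef T α η t * ∑ i, (phat t i + ∑ j, Θ t i j * d t j)
    + γ * ∑ t ∈ Finset.range T, ∑ i, (uhat t i + ∑ j, Γ t i j * d t j)

/-- The worst-case cost of an affine policy over all admissible disturbances. -/
def wcCost (n T : ℕ) (α η γ : ℝ) (pbar : Fin n → ℝ) (r : ℕ → Fin n → ℝ)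
    (phat uhat : ℕ → Fin n → ℝ) (Θ Γ : ℕ → Matrix (Fin n) (Fin n) ℝ) : ℝ :=
  sSup {x : ℝ | ∃ d : ℕ → Fin n → ℝ, distOK n T r d ∧
    x = realCost n T α η γ pbar phat uhat Θ Γ d}

/-- Robust feasibility: all operational constraints hold for every admissible disturbance. -/
def RobustFeasible (n T : ℕ) (α : ℝ) (pbar : Fin n → ℝ)
    (A : Matrix (Fin n) (Fin n) ℝ) (ehat : ℕ → Fin n → ℝ) (F : ℕ → ℝ)
    (r : ℕ → Fin n → ℝ) (phat uhat : ℕ → Fin n → ℝ)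
    (Θ Γ : ℕ → Matrix (Fin n) (Fin n) ℝ) : Prop :=
  ∀ d : ℕ → Fin n → ℝ, distOK n T r d →
    ∀ t, t < T →
      (∀ i, 0 ≤ phat t i + ∑ j, Θ t i j * d t j) ∧
      (∀ i, 0 ≤ uhat t i + ∑ j, Γ t i j * d t j) ∧
      (∀ i, ∑ k ∈ Finset.range (t + 1),
          α ^ (t - k) * (phat k i + ∑ j, Θ k i j * d k j) ≤ α ^ t * pbar i) ∧
      (∀ i, 0 ≤ ∑ k ∈ Finset.range (t + 1),
          (ehat k i + d k i + (uhat k i + ∑ j, Γ k i j * d k j)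
            + (∑ j, A j i * (phat k j + ∑ l, Θ k j l * d k l))
            - (phat k i + ∑ j, Θ k i j * d k j))) ∧
      (∑ τ ∈ Finset.range (t + 1), ∑ i, (uhat τ i + ∑ j, Γ τ i j * d τ j) ≤ F t)

/-- Feasibility for the explicit (deterministic) linear program. -/
def LPFeasible (n T : ℕ) (α : ℝ) (pbar : Fin n → ℝ)
    (A : Matrix (Fin n) (Fin n) ℝ) (ehat : ℕ → Fin n → ℝ) (F : ℕ → ℝ)
    (r : ℕ → Fin n → ℝ) (phat uhat : ℕ → Fin n → ℝ)
    (Θ Γ : ℕ → Matrix (Fin n) (Fin n) ℝ) : Prop :=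
  ∀ t, t < T →
    (∀ i, 0 ≤ phat t i - ∑ j, |Θ t i j| * r t j) ∧
    (∀ i, 0 ≤ uhat t i - ∑ j, |Γ t i j| * r t j) ∧
    (∀ i, ∑ k ∈ Finset.range (t + 1),
        α ^ (t - k) * (phat k i + ∑ j, |Θ k i j| * r k j) ≤ α ^ t * pbar i) ∧
    (∀ i, 0 ≤ (∑ k ∈ Finset.range (t + 1),
          (ehat k i + uhat k i + (∑ j, A j i * phat k j) - phat k i))
        - ∑ k ∈ Finset.range (t + 1), ∑ j,
            |(1 + Γ k + (A.transpose - 1) * Θ k) i j| * r k j) ∧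
    (∑ τ ∈ Finset.range (t + 1), ((∑ i, uhat τ i) + ∑ j, |∑ i, Γ τ i j| * r τ j) ≤ F t)

/-- The objective `J̄` of the explicit linear program. -/
def lpCost (n T : ℕ) (α η γ : ℝ) (pbar : Fin n → ℝ) (r : ℕ → Fin n → ℝ)
    (phat uhat : ℕ → Fin n → ℝ) (Θ Γ : ℕ → Matrix (Fin n) (Fin n) ℝ) : ℝ :=
  betaCoef T α η 0 * ∑ i, pbar i
    - ∑ t ∈ Finset.range T, betaCoef T α η t * ∑ i, phat t i
    + γ * ∑ t ∈ Finset.range T, ∑ i, uhat t i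
    + ∑ t ∈ Finset.range T, ∑ j,
        |∑ i, (γ * Γ t i j - betaCoef T α η t * Θ t i j)| * r t j


private lemma sgn_mul (c rr : ℝ) : c * (if 0 ≤ c then rr else -rr) = |c| * rr := by
  split_ifs with h
  · rw [abs_of_nonneg h]
  · rw [abs_of_neg (lt_of_not_ge h)]; ring

private lemma sgn_mul_neg (c rr : ℝ) : c * (if 0 ≤ c then -rr else rr) = -(|c| * rr) := by
  split_ifs with h
  · rw [abs_of_nonneg h]; ring
  · rw [abs_of_neg (lt_of_not_ge h)]; ring

private lemma abs_ite_le {rr : ℝ} (h : 0 ≤ rr) (P : Prop) [Decidable P] :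
    |if P then rr else -rr| ≤ rr := by
  split_ifs <;> simp [abs_of_nonneg h, h]

private lemma abs_ite_le' {rr : ℝ} (h : 0 ≤ rr) (P : Prop) [Decidable P] :
    |if P then -rr else rr| ≤ rr := by
  split_ifs <;> simp [abs_of_nonneg h, h]

private lemma dot_le {ι : Type*} (s : Finset ι) (c d r : ι → ℝ)
    (h : ∀ j ∈ s, |d j| ≤ r j) :
    ∑ j ∈ s, c j * d j ≤ ∑ j ∈ s, |c j| * r j := by
  refine Finset.sum_le_sum fun j hj => ?_
  calc c j * d j ≤ |c j * d j| := le_abs_self _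
    _ = |c j| * |d j| := abs_mul _ _
    _ ≤ |c j| * r j := mul_le_mul_of_nonneg_left (h j hj) (abs_nonneg _)

private lemma neg_dot_le {ι : Type*} (s : Finset ι) (c d r : ι → ℝ)
    (h : ∀ j ∈ s, |d j| ≤ r j) :
    -∑ j ∈ s, |c j| * r j ≤ ∑ j ∈ s, c j * d j := by
  have h2 := dot_le s (fun j => -(c j)) d r h
  simp only [neg_mul, abs_neg, Finset.sum_neg_distrib] at h2
  linarith

private lemma wsum_eq {n : ℕ} (A : Matrix (Fin n) (Fin n) ℝ)
    (ehat phat uhat : ℕ → Fin n → ℝ)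
    (Θ Γ : ℕ → Matrix (Fin n) (Fin n) ℝ) (d : ℕ → Fin n → ℝ) (t : ℕ) (i : Fin n) :
    ∑ k ∈ Finset.range (t+1),
      (ehat k i + d k i + (uhat k i + ∑ j, Γ k i j * d k j)
        + (∑ j, A j i * (phat k j + ∑ l, Θ k j l * d k l))
        - (phat k i + ∑ j, Θ k i j * d k j))
    = (∑ k ∈ Finset.range (t+1), (ehat k i + uhat k i + (∑ j, A j i * phat k j) - phat k i))
      + ∑ k ∈ Finset.range (t+1), ∑ l, (1 + Γ k + (A.transpose - 1) * Θ k) i l * d k l := by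
  rw [← Finset.sum_add_distrib]
  refine Finset.sum_congr rfl fun k _ => ?_
  have hM : ∀ l, (1 + Γ k + (A.transpose - 1) * Θ k) i l
      = (if i = l then (1:ℝ) else 0) + Γ k i l + ((∑ j, A j i * Θ k j l) - Θ k i l) := by
    intro l
    simp [Matrix.add_apply, Matrix.mul_apply, Matrix.sub_apply, Matrix.one_apply,
      Matrix.transpose_apply, sub_mul, Finset.sum_sub_distrib]
  have hRHS : ∑ l, (1 + Γ k + (A.transpose - 1) * Θ k) i l * d k l
      = d k i + ∑ l, Γ k i l * d k l
        + ((∑ l, (∑ j, A j i * Θ k j l) * d k l) - ∑ l, Θ k i l * d k l) := by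
    simp_rw [hM, add_mul, sub_mul, Finset.sum_add_distrib, Finset.sum_sub_distrib,
      ite_mul, one_mul, zero_mul, Finset.sum_ite_eq, Finset.mem_univ, if_true]
  have hAC : ∑ j, A j i * ∑ l, Θ k j l * d k l = ∑ l, (∑ j, A j i * Θ k j l) * d k l := by
    simp_rw [Finset.mul_sum, Finset.sum_mul, ← mul_assoc]
    exact Finset.sum_comm
  have hAp : ∑ j, A j i * (phat k j + ∑ l, Θ k j l * d k l)
      = (∑ j, A j i * phat k j) + ∑ j, A j i * ∑ l, Θ k j l * d k l := by
    simp_rw [mul_add, Finset.sum_add_distrib]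
  rw [hRHS, hAp, hAC]; ring

private lemma realCost_eq (n T : ℕ) (α η γ : ℝ) (pbar : Fin n → ℝ)
    (phat uhat : ℕ → Fin n → ℝ) (Θ Γ : ℕ → Matrix (Fin n) (Fin n) ℝ)
    (d : ℕ → Fin n → ℝ) :
    realCost n T α η γ pbar phat uhat Θ Γ d
    = (betaCoef T α η 0 * ∑ i, pbar i
        - ∑ t ∈ Finset.range T, betaCoef T α η t * ∑ i, phat t i
        + γ * ∑ t ∈ Finset.range T, ∑ i, uhat t i)
      + ∑ t ∈ Finset.range T, ∑ j,
          (∑ i, (γ * Γ t i j - betaCoef T α η t * Θ t i j)) * d t j := by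
  unfold realCost
  have key : ∀ t, ∑ j, (∑ i, (γ * Γ t i j - betaCoef T α η t * Θ t i j)) * d t j
      = γ * (∑ i, ∑ j, Γ t i j * d t j)
        - betaCoef T α η t * (∑ i, ∑ j, Θ t i j * d t j) := by
    intro t
    rw [show (∑ i, ∑ j, Γ t i j * d t j) = ∑ j, ∑ i, Γ t i j * d t j from Finset.sum_comm,
      show (∑ i, ∑ j, Θ t i j * d t j) = ∑ j, ∑ i, Θ t i j * d t j from Finset.sum_comm,
      Finset.mul_sum, Finset.mul_sum, ← Finset.sum_sub_distrib]
    refine Finset.sum_congr rfl fun j _ => ?_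
    rw [Finset.sum_mul, Finset.mul_sum, Finset.mul_sum, ← Finset.sum_sub_distrib]
    exact Finset.sum_congr rfl fun i _ => by ring
  simp_rw [key, Finset.sum_add_distrib, mul_add, Finset.sum_sub_distrib, ← Finset.mul_sum]
  rw [Finset.sum_add_distrib]
  ring

private lemma wc_eq_lp (n T : ℕ) (α η γ : ℝ) (pbar : Fin n → ℝ)
    (r : ℕ → Fin n → ℝ) (hr : ∀ t, t < T → ∀ j, 0 ≤ r t j)
    (phat uhat : ℕ → Fin n → ℝ) (Θ Γ : ℕ → Matrix (Fin n) (Fin n) ℝ) :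
    wcCost n T α η γ pbar r phat uhat Θ Γ = lpCost n T α η γ pbar r phat uhat Θ Γ := by
  have hub : ∀ x ∈ {x : ℝ | ∃ d : ℕ → Fin n → ℝ, distOK n T r d ∧
      x = realCost n T α η γ pbar phat uhat Θ Γ d},
      x ≤ lpCost n T α η γ pbar r phat uhat Θ Γ := by
    rintro x ⟨d, hd, rfl⟩
    rw [realCost_eq]
    unfold lpCost
    have hle : ∑ t ∈ Finset.range T, ∑ j,
          (∑ i, (γ * Γ t i j - betaCoef T α η t * Θ t i j)) * d t j
        ≤ ∑ t ∈ Finset.range T, ∑ j,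
          |∑ i, (γ * Γ t i j - betaCoef T α η t * Θ t i j)| * r t j :=
      Finset.sum_le_sum fun t ht =>
        dot_le _ _ _ _ fun j _ => hd t (Finset.mem_range.mp ht) j
    linarith
  have hdOK : distOK n T r (fun t j =>
      if 0 ≤ ∑ i, (γ * Γ t i j - betaCoef T α η t * Θ t i j) then r t j else -(r t j)) :=
    fun k hk j => abs_ite_le (hr k hk j) _
  have hlp : lpCost n T α η γ pbar r phat uhat Θ Γ
      = realCost n T α η γ pbar phat uhat Θ Γ (fun t j =>
          if 0 ≤ ∑ i, (γ * Γ t i j - betaCoef T α η t * Θ t i j) then r t j else -(r t j)) := by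
    rw [realCost_eq]
    unfold lpCost
    congr 1
    refine Finset.sum_congr rfl fun t _ => Finset.sum_congr rfl fun j _ => ?_
    exact (sgn_mul _ _).symm
  unfold wcCost
  apply le_antisymm
  · exact csSup_le ⟨_, _, hdOK, rfl⟩ hub
  · exact le_csSup ⟨_, hub⟩ ⟨_, hdOK, hlp⟩

private lemma robust_iff_lp (n T : ℕ) (α : ℝ) (hα : 1 ≤ α)
    (pbar : Fin n → ℝ) (A : Matrix (Fin n) (Fin n) ℝ)
    (ehat : ℕ → Fin n → ℝ) (F : ℕ → ℝ) (r : ℕ → Fin n → ℝ)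
    (hr : ∀ t, t < T → ∀ j, 0 ≤ r t j)
    (phat uhat : ℕ → Fin n → ℝ) (Θ Γ : ℕ → Matrix (Fin n) (Fin n) ℝ) :
    RobustFeasible n T α pbar A ehat F r phat uhat Θ Γ ↔
      LPFeasible n T α pbar A ehat F r phat uhat Θ Γ := by
  have hα0 : (0:ℝ) ≤ α := le_trans zero_le_one hα
  constructor
  · intro h t ht
    refine ⟨?_, ?_, ?_, ?_, ?_⟩
    · intro i
      set d : ℕ → Fin n → ℝ := fun k j => if 0 ≤ Θ t i j then -(r k j) else r k j with hdd
      have hOK : distOK n T r d := fun k hk j => abs_ite_le' (hr k hk j) _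
      have h1 := (h d hOK t ht).1 i
      have h2 : ∑ j, Θ t i j * d t j = -∑ j, |Θ t i j| * r t j := by
        rw [← Finset.sum_neg_distrib]
        simp only [hdd]
        exact Finset.sum_congr rfl fun j _ => sgn_mul_neg _ _
      rw [h2] at h1; linarith
    · intro i
      set d : ℕ → Fin n → ℝ := fun k j => if 0 ≤ Γ t i j then -(r k j) else r k j with hdd
      have hOK : distOK n T r d := fun k hk j => abs_ite_le' (hr k hk j) _
      have h1 := (h d hOK t ht).2.1 i
      have h2 : ∑ j, Γ t i j * d t j = -∑ j, |Γ t i j| * r t j := by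
        rw [← Finset.sum_neg_distrib]
        simp only [hdd]
        exact Finset.sum_congr rfl fun j _ => sgn_mul_neg _ _
      rw [h2] at h1; linarith
    · intro i
      set d : ℕ → Fin n → ℝ := fun k j => if 0 ≤ Θ k i j then r k j else -(r k j) with hdd
      have hOK : distOK n T r d := fun k hk j => abs_ite_le (hr k hk j) _
      have h1 := (h d hOK t ht).2.2.1 i
      calc ∑ k ∈ Finset.range (t+1), α ^ (t-k) * (phat k i + ∑ j, |Θ k i j| * r k j)
          = ∑ k ∈ Finset.range (t+1), α ^ (t-k) * (phat k i + ∑ j, Θ k i j * d k j) := by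
            refine Finset.sum_congr rfl fun k _ => ?_
            simp only [hdd]
            rw [Finset.sum_congr rfl fun j _ => (sgn_mul (Θ k i j) (r k j))]
        _ ≤ α ^ t * pbar i := h1
    · intro i
      set d : ℕ → Fin n → ℝ := fun k l =>
        if 0 ≤ (1 + Γ k + (A.transpose - 1) * Θ k) i l then -(r k l) else r k l with hdd
      have hOK : distOK n T r d := fun k hk j => abs_ite_le' (hr k hk j) _
      have h1 := (h d hOK t ht).2.2.2.1 i
      rw [wsum_eq] at h1
      have h2 : ∑ k ∈ Finset.range (t+1), ∑ l, (1 + Γ k + (A.transpose - 1) * Θ k) i l * d k l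
          = -∑ k ∈ Finset.range (t+1), ∑ l,
              |(1 + Γ k + (A.transpose - 1) * Θ k) i l| * r k l := by
        rw [← Finset.sum_neg_distrib]
        refine Finset.sum_congr rfl fun k _ => ?_
        rw [← Finset.sum_neg_distrib]
        simp only [hdd]
        exact Finset.sum_congr rfl fun l _ => sgn_mul_neg _ _
      rw [h2] at h1; linarith
    · set d : ℕ → Fin n → ℝ := fun k j => if 0 ≤ ∑ i, Γ k i j then r k j else -(r k j) with hdd
      have hOK : distOK n T r d := fun k hk j => abs_ite_le (hr k hk j) _
      have h1 := (h d hOK t ht).2.2.2.2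
      have h2 : ∀ τ, ∑ i, (uhat τ i + ∑ j, Γ τ i j * d τ j)
          = (∑ i, uhat τ i) + ∑ j, |∑ i, Γ τ i j| * r τ j := by
        intro τ
        rw [Finset.sum_add_distrib]
        congr 1
        rw [Finset.sum_comm]
        refine Finset.sum_congr rfl fun j _ => ?_
        rw [← Finset.sum_mul]
        simp only [hdd]
        exact sgn_mul _ _
      simp_rw [h2] at h1
      exact h1
  · intro h d hd t ht
    obtain ⟨l1, l2, l3, l4, l5⟩ := h t ht
    refine ⟨?_, ?_, ?_, ?_, ?_⟩
    · intro i
      have hb := neg_dot_le Finset.univ (Θ t i) (d t) (r t) fun j _ => hd t ht j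
      have := l1 i; linarith
    · intro i
      have hb := neg_dot_le Finset.univ (Γ t i) (d t) (r t) fun j _ => hd t ht j
      have := l2 i; linarith
    · intro i
      refine le_trans (Finset.sum_le_sum fun k hk => ?_) (l3 i)
      have hkT : k < T := lt_of_le_of_lt (Nat.lt_succ_iff.mp (Finset.mem_range.mp hk)) ht
      have hb := dot_le Finset.univ (Θ k i) (d k) (r k) fun j _ => hd k hkT j
      have hp : (0:ℝ) ≤ α ^ (t-k) := pow_nonneg hα0 _
      exact mul_le_mul_of_nonneg_left (by linarith) hp
    · intro i
      rw [wsum_eq]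
      have hB : -∑ k ∈ Finset.range (t+1), ∑ l,
            |(1 + Γ k + (A.transpose - 1) * Θ k) i l| * r k l
          ≤ ∑ k ∈ Finset.range (t+1), ∑ l,
            (1 + Γ k + (A.transpose - 1) * Θ k) i l * d k l := by
        rw [← Finset.sum_neg_distrib]
        refine Finset.sum_le_sum fun k hk => ?_
        have hkT : k < T := lt_of_le_of_lt (Nat.lt_succ_iff.mp (Finset.mem_range.mp hk)) ht
        have hb := neg_dot_le Finset.univ (fun l => (1 + Γ k + (A.transpose - 1) * Θ k) i l)
          (d k) (r k) fun j _ => hd k hkT j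
        linarith
      have := l4 i; linarith
    · refine le_trans (Finset.sum_le_sum fun τ hτ => ?_) l5
      have hkT : τ < T := lt_of_le_of_lt (Nat.lt_succ_iff.mp (Finset.mem_range.mp hτ)) ht
      rw [Finset.sum_add_distrib]
      have hcomm : ∑ i, ∑ j, Γ τ i j * d τ j = ∑ j, (∑ i, Γ τ i j) * d τ j := by
        rw [Finset.sum_comm]
        exact Finset.sum_congr rfl fun j _ => (Finset.sum_mul _ _ _).symm
      have hb := dot_le Finset.univ (fun j => ∑ i, Γ τ i j) (d τ) (r τ)
        fun j _ => hd τ hkT j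
      rw [hcomm]
      exact add_le_add_right hb _


theorem stmt19_robust_problem_is_LP (n T : ℕ) (hn : 1 ≤ n) (hT : 1 ≤ T)
    (α η γ : ℝ) (hα : 1 ≤ α) (hη0 : 0 ≤ η) (hη1 : η < 1) (hγ : 0 ≤ γ)
    (pbar : Fin n → ℝ) (hpbar : ∀ i, 0 ≤ pbar i)
    (A : Matrix (Fin n) (Fin n) ℝ) (hA : ∀ i j, 0 ≤ A i j)
    (ehat : ℕ → Fin n → ℝ) (he : ∀ t, t < T → ∀ i, 0 ≤ ehat t i)
    (F : ℕ → ℝ) (hF : ∀ t, 0 ≤ F t) (hFmono : ∀ s t, s ≤ t → F s ≤ F t)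
    (r : ℕ → Fin n → ℝ) (hr : ∀ t, t < T → ∀ j, 0 ≤ r t j) :
    (∀ (phat uhat : ℕ → Fin n → ℝ) (Θ Γ : ℕ → Matrix (Fin n) (Fin n) ℝ),
      (RobustFeasible n T α pbar A ehat F r phat uhat Θ Γ ∧
        ∀ (phat' uhat' : ℕ → Fin n → ℝ) (Θ' Γ' : ℕ → Matrix (Fin n) (Fin n) ℝ),
          RobustFeasible n T α pbar A ehat F r phat' uhat' Θ' Γ' →
            wcCost n T α η γ pbar r phat uhat Θ Γ ≤
              wcCost n T α η γ pbar r phat' uhat' Θ' Γ')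
      ↔
      (LPFeasible n T α pbar A ehat F r phat uhat Θ Γ ∧
        ∀ (phat' uhat' : ℕ → Fin n → ℝ) (Θ' Γ' : ℕ → Matrix (Fin n) (Fin n) ℝ),
          LPFeasible n T α pbar A ehat F r phat' uhat' Θ' Γ' →
            lpCost n T α η γ pbar r phat uhat Θ Γ ≤
              lpCost n T α η γ pbar r phat' uhat' Θ' Γ'))
    ∧
    sInf {v : ℝ | ∃ (phat uhat : ℕ → Fin n → ℝ) (Θ Γ : ℕ → Matrix (Fin n) (Fin n) ℝ),
        RobustFeasible n T α pbar A ehat F r phat uhat Θ Γ ∧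
        v = wcCost n T α η γ pbar r phat uhat Θ Γ} =
      sInf {v : ℝ | ∃ (phat uhat : ℕ → Fin n → ℝ) (Θ Γ : ℕ → Matrix (Fin n) (Fin n) ℝ),
        LPFeasible n T α pbar A ehat F r phat uhat Θ Γ ∧
        v = lpCost n T α η γ pbar r phat uhat Θ Γ} := by
  have hr' : ∀ t, t < T → ∀ j, 0 ≤ r t j := hr
  constructor
  · intro phat uhat Θ Γ
    constructor
    · rintro ⟨hf, hopt⟩
      refine ⟨(robust_iff_lp n T α hα pbar A ehat F r hr' phat uhat Θ Γ).mp hf,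
        fun p' u' Θ' Γ' hf' => ?_⟩
      rw [← wc_eq_lp n T α η γ pbar r hr', ← wc_eq_lp n T α η γ pbar r hr']
      exact hopt p' u' Θ' Γ' ((robust_iff_lp n T α hα pbar A ehat F r hr' p' u' Θ' Γ').mpr hf')
    · rintro ⟨hf, hopt⟩
      refine ⟨(robust_iff_lp n T α hα pbar A ehat F r hr' phat uhat Θ Γ).mpr hf,
        fun p' u' Θ' Γ' hf' => ?_⟩
      rw [wc_eq_lp n T α η γ pbar r hr', wc_eq_lp n T α η γ pbar r hr']
      exact hopt p' u' Θ' Γ' ((robust_iff_lp n T α hα pbar A ehat F r hr' p' u' Θ' Γ').mp hf')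
  · congr 1
    ext v
    constructor
    · rintro ⟨p, u, Θ, Γ, hf, rfl⟩
      exact ⟨p, u, Θ, Γ, (robust_iff_lp n T α hα pbar A ehat F r hr' p u Θ Γ).mp hf,
        wc_eq_lp n T α η γ pbar r hr' p u Θ Γ⟩
    · rintro ⟨p, u, Θ, Γ, hf, rfl⟩
      exact ⟨p, u, Θ, Γ, (robust_iff_lp n T α hα pbar A ehat F r hr' p u Θ Γ).mpr hf,
        (wc_eq_lp n T α η γ pbar r hr' p u Θ Γ).symm⟩
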